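/- Let d ≥ 2, let r be an integer with 1 ≤ r ≤ d−1, and let a, b, c ∈ ℝ. Define the real symmetric d×d matrix M by M_{jk} = (1+δ_{jk})·a if both j,k ≤ r, M_{jk} = (1+δ_{jk})·c if both j,k > r, and M_{jk} = b otherwise; and let P = I − (1/d)·J, where J is the d×d all-ones matrix. Then the characteristic polynomial of P·M·P equals X·(X−a)^{r−1}·(X−c)^{d−r−1}·(X−β), where β = ((r+1)(d−r)·a + r(d−r+1)·c − 2r(d−r)·b)/d. In particular, P·M·P has eigenvalue a with multiplicity r−1, eigenvalue c with multiplicity d−r−1, eigenvalue β with multiplicity 1, and eigenvalue 0 (attained on the all-ones vector). -/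

import Mathlib

open Matrix Polynomial

lemma sum_three_piece (d s t : ℕ) (hst : s ≤ t) (htd : t ≤ d) (p q w : ℝ) :
    ∑ k : Fin d, (if (k : ℕ) < s then p else if (k : ℕ) < t then q else w)
      = (s : ℝ) * p + ((t : ℝ) - s) * q + ((d : ℝ) - t) * w := by
  rw [Fin.sum_univ_eq_sum_range (fun n => if n < s then p else if n < t then q else w)]
  rw [Finset.range_eq_Ico, ← Finset.sum_Ico_consecutive _ (Nat.zero_le t) htd,
      ← Finset.sum_Ico_consecutive _ (Nat.zero_le s) hst]
  have e1 : ∑ n ∈ Finset.Ico 0 s, (if n < s then p else if n < t then q else w)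
      = (s : ℝ) * p := by
    rw [Finset.sum_congr rfl (fun n hn => if_pos (Finset.mem_Ico.mp hn).2),
      Finset.sum_const, Nat.card_Ico, Nat.sub_zero, nsmul_eq_mul]
  have e2 : ∑ n ∈ Finset.Ico s t, (if n < s then p else if n < t then q else w)
      = ((t : ℝ) - s) * q := by
    have h2 : ∀ n ∈ Finset.Ico s t, (if n < s then p else if n < t then q else w) = q := by
      intro n hn
      have h := Finset.mem_Ico.mp hn
      rw [if_neg (by omega), if_pos h.2]
    rw [Finset.sum_congr rfl h2, Finset.sum_const, Nat.card_Ico, nsmul_eq_mul,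
      Nat.cast_sub hst]
  have e3 : ∑ n ∈ Finset.Ico t d, (if n < s then p else if n < t then q else w)
      = ((d : ℝ) - t) * w := by
    have h3 : ∀ n ∈ Finset.Ico t d, (if n < s then p else if n < t then q else w) = w := by
      intro n hn
      have h := Finset.mem_Ico.mp hn
      rw [if_neg (by omega), if_neg (by omega)]
    rw [Finset.sum_congr rfl h3, Finset.sum_const, Nat.card_Ico, nsmul_eq_mul,
      Nat.cast_sub htd]
  rw [e1, e2, e3]

lemma sum_two_piece (d t : ℕ) (htd : t ≤ d) (q w : ℝ) :
    ∑ k : Fin d, (if (k : ℕ) < t then q else w) = (t : ℝ) * q + ((d : ℝ) - t) * w := by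
  have h := sum_three_piece d 0 t (Nat.zero_le t) htd 0 q w
  simp only [Nat.not_lt_zero, if_false, Nat.cast_zero, zero_mul, zero_add, sub_zero] at h
  rw [h]

lemma sum_delta_col {d : ℕ} (g : Fin d → ℝ) (j : Fin d) (h : (j : ℕ) + 1 < d) :
    ∑ k : Fin d, g k * (if k = j then (1:ℝ) else if (k : ℕ) = (j : ℕ) + 1 then -1 else 0)
      = g j - g ⟨(j : ℕ) + 1, h⟩ := by
  have key : ∀ k : Fin d,
      g k * (if k = j then (1:ℝ) else if (k : ℕ) = (j : ℕ) + 1 then -1 else 0)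
      = (if k = j then g k else 0) - (if k = ⟨(j : ℕ)+1, h⟩ then g k else 0) := by
    intro k
    by_cases h1 : k = j
    · subst h1
      have h2 : k ≠ ⟨(k:ℕ)+1, h⟩ := by
        intro hk
        have := congrArg Fin.val hk
        simp at this
      simp [h2]
    · by_cases h2 : k = ⟨(j : ℕ)+1, h⟩
      · have h3 : (k:ℕ) = (j:ℕ)+1 := by rw [h2]
        have h4 : (⟨(j : ℕ)+1, h⟩ : Fin d) ≠ j := by
          intro hk
          have := congrArg Fin.val hk
          omega
        simp [h1, h2, h3, h4]
      · have h3 : (k:ℕ) ≠ (j:ℕ)+1 := fun hk => h2 (Fin.ext hk)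
        simp [h1, h2, h3]
  rw [Finset.sum_congr rfl (fun k _ => key k), Finset.sum_sub_distrib,
      Finset.sum_ite_eq' Finset.univ j g, Finset.sum_ite_eq' Finset.univ _ g]
  simp

lemma charpoly_eq_of_conj {n : ℕ} (A S D : Matrix (Fin n) (Fin n) ℝ)
    (h : A * S = S * D) (hS : S.det ≠ 0) : A.charpoly = D.charpoly := by
  have key : charmatrix A * (Polynomial.C (R := ℝ)).mapMatrix S
      = (Polynomial.C (R := ℝ)).mapMatrix S * charmatrix D := by
    unfold Matrix.charmatrix
    rw [sub_mul, mul_sub, ← _root_.map_mul, h, _root_.map_mul]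
    congr 1
    exact (Matrix.scalar_commute (n := Fin n) (X : ℝ[X]) (fun r' => Commute.all _ _)
      ((Polynomial.C (R := ℝ)).mapMatrix S)).eq
  have hdet := congrArg Matrix.det key
  rw [Matrix.det_mul, Matrix.det_mul, ← RingHom.map_det] at hdet
  have hC : (Polynomial.C (S.det) : ℝ[X]) ≠ 0 := by
    simpa using hS
  unfold Matrix.charpoly
  rw [mul_comm] at hdet
  exact mul_left_cancel₀ hC hdet

lemma charpoly_diag {n : ℕ} (f : Fin n → ℝ) :
    (Matrix.diagonal f).charpoly = ∏ i, (X - C (f i)) := by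
  unfold Matrix.charpoly
  have h : charmatrix (Matrix.diagonal f) = Matrix.diagonal (fun i => X - C (f i)) := by
    ext i j
    by_cases hij : i = j
    · subst hij; simp
    · rw [Matrix.charmatrix_apply_ne _ _ _ hij, Matrix.diagonal_apply_ne _ hij,
        Matrix.diagonal_apply_ne _ hij]
      simp
  rw [h, Matrix.det_diagonal]
def vv (d r : ℕ) : Fin d → ℝ := fun k => if (k:ℕ) < r then (d:ℝ) - r else -(r:ℝ)

def SS (d r : ℕ) : Matrix (Fin d) (Fin d) ℝ := Matrix.of fun k j =>
  if (j:ℕ) = r - 1 then vv d r k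
  else if (j:ℕ) = d - 1 then 1
  else if k = j then 1 else if (k:ℕ) = (j:ℕ) + 1 then -1 else 0

def TT (d r : ℕ) : Matrix (Fin d) (Fin d) ℝ := Matrix.of fun i k =>
  if (i:ℕ) = r - 1 then vv d r k
  else if (i:ℕ) = d - 1 then 1
  else if (i:ℕ) < r - 1 then
    (if (k:ℕ) < (i:ℕ) + 1 then (r:ℝ) - 1 - ((i:ℕ):ℝ) else if (k:ℕ) < r then -((i:ℕ):ℝ) - 1 else 0)
  else
    (if (k:ℕ) < r then 0 else if (k:ℕ) < (i:ℕ) + 1 then (d:ℝ) - 1 - ((i:ℕ):ℝ)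
      else -((i:ℕ):ℝ) - 1 + r)

def ww (d r : ℕ) : Fin d → ℝ := fun i =>
  if (i:ℕ) = r - 1 then (r:ℝ) * ((d:ℝ) - r) * d
  else if (i:ℕ) = d - 1 then (d:ℝ)
  else if (i:ℕ) < r - 1 then (r:ℝ) else (d:ℝ) - r

def ff (d r : ℕ) (a c β : ℝ) : Fin d → ℝ := fun j =>
  if (j:ℕ) = r - 1 then β
  else if (j:ℕ) = d - 1 then 0
  else if (j:ℕ) < r - 1 then a else c

lemma TS_eq (d r : ℕ) (hd : 2 ≤ d) (hr1 : 1 ≤ r) (hrd : r ≤ d - 1) :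
    TT d r * SS d r = Matrix.diagonal (ww d r) := by
  have hrd' : r ≤ d := by omega
  have hdr : ¬ (d - 1 = r - 1) := by omega
  ext i j
  rw [Matrix.mul_apply, Matrix.diagonal_apply]
  by_cases hj1 : (j:ℕ) = r - 1
  · -- column v
    have hcol : ∀ k, SS d r k j = vv d r k := fun k => by simp [SS, hj1]
    by_cases hi1 : (i:ℕ) = r - 1
    · have hij : i = j := Fin.ext (by omega)
      rw [if_pos hij]
      have hprod : ∀ k : Fin d, TT d r i k * SS d r k j
          = (if (k:ℕ) < r then ((d:ℝ)-r)*((d:ℝ)-r) else (-(r:ℝ))*(-(r:ℝ))) := by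
        intro k
        rw [hcol k]
        by_cases hk : (k:ℕ) < r <;> simp [TT, vv, hi1, hk]
      rw [Finset.sum_congr rfl (fun k _ => hprod k), sum_two_piece d r hrd']
      have hww : ww d r i = (r:ℝ) * ((d:ℝ) - r) * d := by simp [ww, hi1]
      rw [hww]
      ring
    · have hne : i ≠ j := by intro h; subst h; omega
      rw [if_neg hne]
      by_cases hi2 : (i:ℕ) = d - 1
      · have hprod : ∀ k : Fin d, TT d r i k * SS d r k j
            = (if (k:ℕ) < r then (d:ℝ)-r else -(r:ℝ)) := by
          intro k
          rw [hcol k]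
          by_cases hk : (k:ℕ) < r <;> simp [TT, vv, hi1, hi2, hdr, hk]
        rw [Finset.sum_congr rfl (fun k _ => hprod k), sum_two_piece d r hrd']
        ring
      · by_cases hi3 : (i:ℕ) < r - 1
        · have hi4 : (i:ℕ) + 1 ≤ r := by omega
          have hprod : ∀ k : Fin d, TT d r i k * SS d r k j
              = (if (k:ℕ) < (i:ℕ)+1 then ((r:ℝ) - 1 - ((i:ℕ):ℝ))*((d:ℝ)-r)
                 else if (k:ℕ) < r then (-((i:ℕ):ℝ) - 1)*((d:ℝ)-r) else 0) := by
            intro k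
            rw [hcol k]
            by_cases hk1 : (k:ℕ) < (i:ℕ)+1
            · have hk2 : (k:ℕ) < r := by omega
              simp [-Order.lt_add_one_iff, TT, vv, hi1, hi2, hi3, hk1, hk2]
            · by_cases hk2 : (k:ℕ) < r <;> simp [-Order.lt_add_one_iff, TT, vv, hi1, hi2, hi3, hk1, hk2]
          rw [Finset.sum_congr rfl (fun k _ => hprod k),
            sum_three_piece d ((i:ℕ)+1) r hi4 hrd']
          push_cast
          ring
        · have hi5 : r ≤ (i:ℕ) := by omega
          have hi6 : (i:ℕ) + 1 ≤ d := i.isLt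
          have hprod : ∀ k : Fin d, TT d r i k * SS d r k j
              = (if (k:ℕ) < r then 0
                 else if (k:ℕ) < (i:ℕ)+1 then ((d:ℝ) - 1 - ((i:ℕ):ℝ))*(-(r:ℝ))
                 else (-((i:ℕ):ℝ) - 1 + r)*(-(r:ℝ))) := by
            intro k
            rw [hcol k]
            by_cases hk1 : (k:ℕ) < r
            · simp [TT, vv, hi1, hi2, hi3, hk1]
            · have hk2 : ¬ (k:ℕ) < r := hk1
              by_cases hk3 : (k:ℕ) < (i:ℕ)+1 <;> simp [-Order.lt_add_one_iff, TT, vv, hi1, hi2, hi3, hk1, hk3]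
          rw [Finset.sum_congr rfl (fun k _ => hprod k),
            sum_three_piece d r ((i:ℕ)+1) (by omega) hi6]
          push_cast
          ring
  · by_cases hj2 : (j:ℕ) = d - 1
    · -- column of ones
      have hcol : ∀ k, SS d r k j = 1 := fun k => by simp [SS, hj1, hj2, hdr]
      by_cases hi1 : (i:ℕ) = r - 1
      · have hne : i ≠ j := by intro h; subst h; omega
        rw [if_neg hne]
        have hprod : ∀ k : Fin d, TT d r i k * SS d r k j
            = (if (k:ℕ) < r then (d:ℝ)-r else -(r:ℝ)) := by
          intro k
          rw [hcol k]
          by_cases hk : (k:ℕ) < r <;> simp [TT, vv, hi1, hk]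
        rw [Finset.sum_congr rfl (fun k _ => hprod k), sum_two_piece d r hrd']
        ring
      · by_cases hi2 : (i:ℕ) = d - 1
        · have hij : i = j := Fin.ext (by omega)
          rw [if_pos hij]
          have hprod : ∀ k : Fin d, TT d r i k * SS d r k j
              = (if (k:ℕ) < r then (1:ℝ) else 1) := by
            intro k
            rw [hcol k]
            by_cases hk : (k:ℕ) < r <;> simp [TT, hi1, hi2, hdr, hk]
          rw [Finset.sum_congr rfl (fun k _ => hprod k), sum_two_piece d r hrd']
          have hww : ww d r i = (d:ℝ) := by simp [ww, hi2, hdr]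
          rw [hww]
          ring
        · have hne : i ≠ j := by intro h; subst h; omega
          rw [if_neg hne]
          by_cases hi3 : (i:ℕ) < r - 1
          · have hi4 : (i:ℕ) + 1 ≤ r := by omega
            have hprod : ∀ k : Fin d, TT d r i k * SS d r k j
                = (if (k:ℕ) < (i:ℕ)+1 then (r:ℝ) - 1 - ((i:ℕ):ℝ)
                   else if (k:ℕ) < r then -((i:ℕ):ℝ) - 1 else 0) := by
              intro k
              rw [hcol k]
              by_cases hk1 : (k:ℕ) < (i:ℕ)+1
              · simp [-Order.lt_add_one_iff, TT, hi1, hi2, hi3, hk1]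
              · by_cases hk2 : (k:ℕ) < r <;> simp [-Order.lt_add_one_iff, TT, hi1, hi2, hi3, hk1, hk2]
            rw [Finset.sum_congr rfl (fun k _ => hprod k),
              sum_three_piece d ((i:ℕ)+1) r hi4 hrd']
            push_cast
            ring
          · have hi6 : (i:ℕ) + 1 ≤ d := i.isLt
            have hprod : ∀ k : Fin d, TT d r i k * SS d r k j
                = (if (k:ℕ) < r then 0
                   else if (k:ℕ) < (i:ℕ)+1 then (d:ℝ) - 1 - ((i:ℕ):ℝ)
                   else -((i:ℕ):ℝ) - 1 + r) := by
              intro k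
              rw [hcol k]
              by_cases hk1 : (k:ℕ) < r
              · simp [TT, hi1, hi2, hi3, hk1]
              · by_cases hk3 : (k:ℕ) < (i:ℕ)+1 <;> simp [-Order.lt_add_one_iff, TT, hi1, hi2, hi3, hk1, hk3]
            rw [Finset.sum_congr rfl (fun k _ => hprod k),
              sum_three_piece d r ((i:ℕ)+1) (by omega) hi6]
            push_cast
            ring
    · -- difference column
      have hlt : (j:ℕ) + 1 < d := by have := j.isLt; omega
      have hcol : ∀ k, SS d r k j
          = (if k = j then (1:ℝ) else if (k:ℕ) = (j:ℕ) + 1 then -1 else 0) := by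
        intro k; simp [SS, hj1, hj2]
      rw [Finset.sum_congr rfl (fun k _ => by rw [hcol k]), sum_delta_col (TT d r i) j hlt]
      by_cases hi1 : (i:ℕ) = r - 1
      · have hne : i ≠ j := by intro h; subst h; omega
        rw [if_neg hne]
        by_cases hjr : (j:ℕ) < r
        · have hjr2 : (j:ℕ) + 1 < r := by omega
          simp [TT, vv, hi1, hjr, hjr2]
        · have hjr2 : ¬ ((j:ℕ) + 1 < r) := by omega
          simp [TT, vv, hi1, hjr, hjr2]
      · by_cases hi2 : (i:ℕ) = d - 1
        · have hne : i ≠ j := by intro h; subst h; omega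
          rw [if_neg hne]
          simp [TT, hi1, hi2, hdr]
        · by_cases hi3 : (i:ℕ) < r - 1
          · rcases lt_trichotomy (j:ℕ) (i:ℕ) with hji | hji | hji
            · have hne : i ≠ j := by intro h; subst h; omega
              rw [if_neg hne]
              simp [-Order.lt_add_one_iff, TT, hi1, hi2, hi3, show (j:ℕ) < (i:ℕ)+1 by omega,
                show (j:ℕ)+1 < (i:ℕ)+1 by omega]
            · have hij : i = j := Fin.ext (by omega)
              rw [if_pos hij]
              have e1 : (j:ℕ) < (i:ℕ)+1 := by omega
              have e2 : ¬ ((j:ℕ)+1 < (i:ℕ)+1) := by omega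
              have e3 : (j:ℕ)+1 < r := by omega
              simp [-Order.lt_add_one_iff, TT, ww, hi1, hi2, hi3, e1, e2, e3]
              ring
            · have hne : i ≠ j := by intro h; subst h; omega
              rw [if_neg hne]
              have e1 : ¬ ((j:ℕ) < (i:ℕ)+1) := by omega
              have e2 : ¬ ((j:ℕ)+1 < (i:ℕ)+1) := by omega
              by_cases hjr : (j:ℕ) < r
              · have e3 : (j:ℕ)+1 < r := by omega
                simp [-Order.lt_add_one_iff, TT, hi1, hi2, hi3, e1, e2, hjr, e3]
              · have e3 : ¬ ((j:ℕ)+1 < r) := by omega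
                simp [-Order.lt_add_one_iff, TT, hi1, hi2, hi3, e1, e2, hjr, e3]
          · have hir : r ≤ (i:ℕ) := by omega
            by_cases hjr : (j:ℕ) < r
            · have hne : i ≠ j := by intro h; subst h; omega
              rw [if_neg hne]
              simp [TT, hi1, hi2, hi3, hjr, show (j:ℕ)+1 < r by omega]
            · rcases lt_trichotomy (j:ℕ) (i:ℕ) with hji | hji | hji
              · have hne : i ≠ j := by intro h; subst h; omega
                rw [if_neg hne]
                simp [-Order.lt_add_one_iff, TT, hi1, hi2, hi3, hjr, show ¬ ((j:ℕ)+1 < r) by omega,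
                  show (j:ℕ) < (i:ℕ)+1 by omega, show (j:ℕ)+1 < (i:ℕ)+1 by omega]
              · have hij : i = j := Fin.ext (by omega)
                rw [if_pos hij]
                have e1 : (j:ℕ) < (i:ℕ)+1 := by omega
                have e2 : ¬ ((j:ℕ)+1 < (i:ℕ)+1) := by omega
                simp [-Order.lt_add_one_iff, TT, ww, hi1, hi2, hi3, hjr, show ¬ ((j:ℕ)+1 < r) by omega, e1, e2]
                ring
              · have hne : i ≠ j := by intro h; subst h; omega
                rw [if_neg hne]
                have e1 : ¬ ((j:ℕ) < (i:ℕ)+1) := by omega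
                have e2 : ¬ ((j:ℕ)+1 < (i:ℕ)+1) := by omega
                simp [-Order.lt_add_one_iff, TT, hi1, hi2, hi3, hjr, show ¬ ((j:ℕ)+1 < r) by omega, e1, e2]
lemma P_mulVec {d : ℕ} (hd : 0 < d) (P : Matrix (Fin d) (Fin d) ℝ)
    (hP : P = 1 - ((d : ℝ))⁻¹ • Matrix.of (fun _ _ => (1 : ℝ)))
    (x : Fin d → ℝ) :
    P *ᵥ x = fun i => x i - (∑ k, x k) / d := by
  funext i
  subst hP
  simp only [Matrix.mulVec, dotProduct, Matrix.sub_apply, Matrix.smul_apply,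
    Matrix.of_apply, Matrix.one_apply, smul_eq_mul, mul_one, sub_mul]
  rw [Finset.sum_sub_distrib]
  congr 1
  · simp [ite_mul]
  · rw [← Finset.mul_sum, inv_mul_eq_div]

lemma P_ones {d : ℕ} (hd : 0 < d) (P : Matrix (Fin d) (Fin d) ℝ)
    (hP : P = 1 - ((d : ℝ))⁻¹ • Matrix.of (fun _ _ => (1 : ℝ))) :
    P *ᵥ (fun _ => (1 : ℝ)) = 0 := by
  have hd0 : (d : ℝ) ≠ 0 := Nat.cast_ne_zero.mpr (by omega)
  rw [P_mulVec hd P hP]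
  funext i
  have hx : ∑ _k : Fin d, (1:ℝ) = d := by simp
  show 1 - (∑ _k : Fin d, (1:ℝ)) / d = 0
  rw [hx, div_self hd0, sub_self]

lemma M_row (d r : ℕ) (a b c : ℝ) (M : Matrix (Fin d) (Fin d) ℝ)
    (hM : ∀ j k : Fin d, M j k =
      if j.val < r ∧ k.val < r then (1 + if j = k then (1:ℝ) else 0) * a
      else if r ≤ j.val ∧ r ≤ k.val then (1 + if j = k then (1:ℝ) else 0) * c
      else b) (i : Fin d) (x : Fin d → ℝ) :
    (M *ᵥ x) i = (if (i:ℕ) < r then a else c) * x i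
      + ∑ k : Fin d, (if (k:ℕ) < r then (if (i:ℕ) < r then a else b)
              else (if (i:ℕ) < r then b else c)) * x k := by
  have hMsplit : ∀ k : Fin d, M i k =
      (if i = k then (if (i:ℕ) < r then a else c) else 0)
      + (if (k:ℕ) < r then (if (i:ℕ) < r then a else b)
         else (if (i:ℕ) < r then b else c)) := by
    intro k
    rw [hM i k]
    by_cases hik : i = k
    · subst hik
      split_ifs <;> first | ring1 | (exfalso; omega) | simp_all
    · split_ifs <;> first | ring1 | (exfalso; omega) | simp_all
  simp only [Matrix.mulVec, dotProduct]
  rw [Finset.sum_congr rfl (fun k _ => by rw [hMsplit k, add_mul]), Finset.sum_add_distrib]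
  congr 1
  simp [ite_mul]

lemma M_block (d r : ℕ) (hrd' : r ≤ d) (a b c : ℝ) (M : Matrix (Fin d) (Fin d) ℝ)
    (hM : ∀ j k : Fin d, M j k =
      if j.val < r ∧ k.val < r then (1 + if j = k then (1:ℝ) else 0) * a
      else if r ≤ j.val ∧ r ≤ k.val then (1 + if j = k then (1:ℝ) else 0) * c
      else b) (p q : ℝ) (i : Fin d) :
    (M *ᵥ (fun k => if (k:ℕ) < r then p else q)) i =
      if (i:ℕ) < r then ((r:ℝ)+1) * (a*p) + ((d:ℝ) - r) * (b*q)
      else (r:ℝ) * (b*p) + (((d:ℝ) - r) + 1) * (c*q) := by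
  rw [M_row d r a b c M hM i]
  have hfuse : ∀ k : Fin d, (if (k:ℕ) < r then (if (i:ℕ) < r then a else b)
      else (if (i:ℕ) < r then b else c)) * (if (k:ℕ) < r then p else q)
      = (if (k:ℕ) < r then (if (i:ℕ) < r then a*p else b*p)
         else (if (i:ℕ) < r then b*q else c*q)) := by
    intro k
    by_cases hk : (k:ℕ) < r <;> by_cases hi : (i:ℕ) < r <;> simp [hk, hi]
  rw [Finset.sum_congr rfl (fun k _ => hfuse k), sum_two_piece d r hrd']
  by_cases hi : (i:ℕ) < r <;> simp [hi] <;> ring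

lemma M_delta (d : ℕ) (M : Matrix (Fin d) (Fin d) ℝ) (j : Fin d) (h : (j:ℕ)+1 < d) :
    M *ᵥ (fun k => if k = j then (1:ℝ) else if (k:ℕ) = (j:ℕ)+1 then -1 else 0)
    = fun i => M i j - M i ⟨(j:ℕ)+1, h⟩ := by
  funext i
  simp only [Matrix.mulVec, dotProduct]
  exact sum_delta_col (fun k => M i k) j h

lemma MS_eq (d r : ℕ) (hd : 2 ≤ d) (hr1 : 1 ≤ r) (hrd : r ≤ d - 1)
    (a b c β : ℝ) (M P : Matrix (Fin d) (Fin d) ℝ)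
    (hM : ∀ j k : Fin d, M j k =
      if j.val < r ∧ k.val < r then (1 + if j = k then (1:ℝ) else 0) * a
      else if r ≤ j.val ∧ r ≤ k.val then (1 + if j = k then (1:ℝ) else 0) * c
      else b)
    (hP : P = 1 - ((d : ℝ))⁻¹ • Matrix.of (fun _ _ => (1 : ℝ)))
    (hβ : β = (((r : ℝ) + 1) * ((d : ℝ) - r) * a + (r : ℝ) * ((d : ℝ) - r + 1) * c
      - 2 * r * ((d : ℝ) - r) * b) / d) :
    P * M * P * SS d r = SS d r * Matrix.diagonal (ff d r a c β) := by
  have hrd' : r ≤ d := by omega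
  have hdr : ¬ (d - 1 = r - 1) := by omega
  have hdpos : 0 < d := by omega
  have hd0 : (d : ℝ) ≠ 0 := Nat.cast_ne_zero.mpr (by omega)
  have hPx := P_mulVec hdpos P hP
  have hPfix : ∀ x : Fin d → ℝ, (∑ k, x k) = 0 → P *ᵥ x = x := by
    intro x hx
    rw [hPx x]
    funext i
    rw [hx]
    simp
  have hcols : ∀ j : Fin d, (P * M * P) *ᵥ (fun k => SS d r k j)
      = fun k => ff d r a c β j * SS d r k j := by
    intro j
    rw [← Matrix.mulVec_mulVec, ← Matrix.mulVec_mulVec]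
    by_cases hj1 : (j:ℕ) = r - 1
    · -- the v column
      have hcol : (fun k => SS d r k j) = vv d r := funext fun k => by simp [SS, hj1]
      rw [hcol]
      have hsumv : ∑ k, vv d r k = 0 := by
        unfold vv
        rw [sum_two_piece d r hrd']
        ring
      rw [hPfix _ hsumv]
      have hMv : M *ᵥ vv d r = fun i : Fin d =>
          if (i:ℕ) < r then ((r:ℝ)+1) * (a*((d:ℝ)-r)) + ((d:ℝ) - r) * (b*(-(r:ℝ)))
          else (r:ℝ) * (b*((d:ℝ)-r)) + (((d:ℝ) - r) + 1) * (c*(-(r:ℝ))) := by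
        funext i
        exact M_block d r hrd' a b c M hM ((d:ℝ)-r) (-(r:ℝ)) i
      rw [hMv, hPx]
      funext i
      rw [sum_two_piece d r hrd']
      have hff : ff d r a c β j = β := by simp [ff, hj1]
      have hSS : SS d r i j = vv d r i := by simp [SS, hj1]
      rw [hff, hSS]
      unfold vv
      rw [hβ]
      by_cases hi : (i:ℕ) < r <;> simp only [hi, if_true, if_false] <;> field_simp <;> ring
    · by_cases hj2 : (j:ℕ) = d - 1
      · -- the all ones column
        have hcol : (fun k => SS d r k j) = fun _ => (1:ℝ) :=
          funext fun k => by simp [SS, hj1, hj2, hdr]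
        rw [hcol, P_ones hdpos P hP, Matrix.mulVec_zero, Matrix.mulVec_zero]
        have hff : ff d r a c β j = 0 := by simp [ff, hj1, hj2, hdr]
        rw [hff]
        funext k
        simp
      · -- difference column
        have hlt : (j:ℕ) + 1 < d := by have := j.isLt; omega
        have hcol : (fun k => SS d r k j)
            = (fun k => if k = j then (1:ℝ) else if (k:ℕ) = (j:ℕ)+1 then -1 else 0) :=
          funext fun k => by simp [SS, hj1, hj2]
        have hsum0 : ∑ k : Fin d, (if k = j then (1:ℝ) else if (k:ℕ) = (j:ℕ)+1 then -1 else 0)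
            = 0 := by
          have h := sum_delta_col (fun _ => (1:ℝ)) j hlt
          simpa using h
        rw [hcol, hPfix _ hsum0, M_delta d M j hlt]
        by_cases hjr : (j:ℕ) < r - 1
        · have hvj : (j:ℕ) < r := by omega
          have hvj1 : (j:ℕ) + 1 < r := by omega
          have heq : (fun i => M i j - M i ⟨(j:ℕ)+1, hlt⟩)
              = a • (fun i => if i = j then (1:ℝ) else if (i:ℕ) = (j:ℕ)+1 then -1 else 0) := by
            funext i
            show M i j - M i ⟨(j:ℕ)+1, hlt⟩
                = a * (if i = j then (1:ℝ) else if (i:ℕ) = (j:ℕ)+1 then -1 else 0)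
            rw [hM i j, hM i ⟨(j:ℕ)+1, hlt⟩]
            simp only [Fin.val_mk]
            by_cases hi : (i:ℕ) < r
            · have c1 : (i:ℕ) < r ∧ (j:ℕ) < r := ⟨hi, hvj⟩
              have c2 : (i:ℕ) < r ∧ (j:ℕ)+1 < r := ⟨hi, hvj1⟩
              rw [if_pos c1, if_pos c2]
              by_cases hij : i = j
              · have hne : i ≠ (⟨(j:ℕ)+1, hlt⟩ : Fin d) := by
                  intro h
                  have ha : (i:ℕ) = (j:ℕ)+1 := congrArg Fin.val h
                  have hb : (i:ℕ) = (j:ℕ) := congrArg Fin.val hij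
                  omega
                rw [if_pos hij, if_neg hne, if_pos hij]
                ring
              · by_cases hij' : i = (⟨(j:ℕ)+1, hlt⟩ : Fin d)
                · have he : (i:ℕ) = (j:ℕ)+1 := congrArg Fin.val hij'
                  rw [if_neg hij, if_pos hij', if_neg hij, if_pos he]
                  ring
                · have hne : ¬ (i:ℕ) = (j:ℕ)+1 := fun h => hij' (Fin.ext h)
                  rw [if_neg hij, if_neg hij', if_neg hij, if_neg hne]
                  ring
            · have h1 : ¬ ((i:ℕ) < r ∧ (j:ℕ) < r) := by omega
              have h2 : ¬ ((i:ℕ) < r ∧ (j:ℕ)+1 < r) := by omega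
              have h3 : ¬ (r ≤ (i:ℕ) ∧ r ≤ (j:ℕ)) := by omega
              have h4 : ¬ (r ≤ (i:ℕ) ∧ r ≤ (j:ℕ)+1) := by omega
              have hij : i ≠ j := by intro h; have := congrArg Fin.val h; omega
              have hne : ¬ (i:ℕ) = (j:ℕ)+1 := by omega
              rw [if_neg h1, if_neg h3, if_neg h2, if_neg h4, if_neg hij, if_neg hne]
              ring
          rw [heq, Matrix.mulVec_smul, hPfix _ hsum0]
          have hff : ff d r a c β j = a := by simp [ff, hj1, hj2, hjr]
          funext k
          have hSkj : SS d r k j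
              = (if k = j then (1:ℝ) else if (k:ℕ) = (j:ℕ)+1 then -1 else 0) := by
            simp [SS, hj1, hj2]
          rw [hff, hSkj]
          rfl
        · have hvj : r ≤ (j:ℕ) := by omega
          have hvj1 : r ≤ (j:ℕ) + 1 := by omega
          have heq : (fun i => M i j - M i ⟨(j:ℕ)+1, hlt⟩)
              = c • (fun i => if i = j then (1:ℝ) else if (i:ℕ) = (j:ℕ)+1 then -1 else 0) := by
            funext i
            show M i j - M i ⟨(j:ℕ)+1, hlt⟩
                = c * (if i = j then (1:ℝ) else if (i:ℕ) = (j:ℕ)+1 then -1 else 0)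
            rw [hM i j, hM i ⟨(j:ℕ)+1, hlt⟩]
            simp only [Fin.val_mk]
            by_cases hi : (i:ℕ) < r
            · have h1 : ¬ ((i:ℕ) < r ∧ (j:ℕ) < r) := by omega
              have h2 : ¬ ((i:ℕ) < r ∧ (j:ℕ)+1 < r) := by omega
              have h3 : ¬ (r ≤ (i:ℕ) ∧ r ≤ (j:ℕ)) := by omega
              have h4 : ¬ (r ≤ (i:ℕ) ∧ r ≤ (j:ℕ)+1) := by omega
              have hij : i ≠ j := by intro h; have := congrArg Fin.val h; omega
              have hne : ¬ (i:ℕ) = (j:ℕ)+1 := by omega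
              rw [if_neg h1, if_neg h3, if_neg h2, if_neg h4, if_neg hij, if_neg hne]
              ring
            · have hile : r ≤ (i:ℕ) := by omega
              have h1 : ¬ ((i:ℕ) < r ∧ (j:ℕ) < r) := by omega
              have h2 : ¬ ((i:ℕ) < r ∧ (j:ℕ)+1 < r) := by omega
              have c1 : r ≤ (i:ℕ) ∧ r ≤ (j:ℕ) := ⟨hile, hvj⟩
              have c2 : r ≤ (i:ℕ) ∧ r ≤ (j:ℕ)+1 := ⟨hile, hvj1⟩
              rw [if_neg h1, if_pos c1, if_neg h2, if_pos c2]
              by_cases hij : i = j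
              · have hne : i ≠ (⟨(j:ℕ)+1, hlt⟩ : Fin d) := by
                  intro h
                  have ha : (i:ℕ) = (j:ℕ)+1 := congrArg Fin.val h
                  have hb : (i:ℕ) = (j:ℕ) := congrArg Fin.val hij
                  omega
                rw [if_pos hij, if_neg hne, if_pos hij]
                ring
              · by_cases hij' : i = (⟨(j:ℕ)+1, hlt⟩ : Fin d)
                · have he : (i:ℕ) = (j:ℕ)+1 := congrArg Fin.val hij'
                  rw [if_neg hij, if_pos hij', if_neg hij, if_pos he]
                  ring
                · have hne : ¬ (i:ℕ) = (j:ℕ)+1 := fun h => hij' (Fin.ext h)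
                  rw [if_neg hij, if_neg hij', if_neg hij, if_neg hne]
                  ring
          rw [heq, Matrix.mulVec_smul, hPfix _ hsum0]
          have hff : ff d r a c β j = c := by simp [ff, hj1, hj2, hjr]
          funext k
          have hSkj : SS d r k j
              = (if k = j then (1:ℝ) else if (k:ℕ) = (j:ℕ)+1 then -1 else 0) := by
            simp [SS, hj1, hj2]
          rw [hff, hSkj]
          rfl
  ext i j
  rw [Matrix.mul_apply, Matrix.mul_diagonal]
  have h := congrFun (hcols j) i
  simp only [Matrix.mulVec, dotProduct] at h
  rw [h, mul_comm]

lemma detS_ne (d r : ℕ) (hd : 2 ≤ d) (hr1 : 1 ≤ r) (hrd : r ≤ d - 1) :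
    (SS d r).det ≠ 0 := by
  intro h0
  have h := congrArg Matrix.det (TS_eq d r hd hr1 hrd)
  rw [Matrix.det_mul, h0, mul_zero, Matrix.det_diagonal] at h
  have h1 : (0:ℝ) < r := by exact_mod_cast hr1
  have h2 : (r:ℝ) < d := by exact_mod_cast (by omega : r < d)
  have h3 : (0:ℝ) < d := by exact_mod_cast (by omega : 0 < d)
  have hne : ∀ i : Fin d, ww d r i ≠ 0 := by
    intro i
    unfold ww
    split_ifs
    · exact ne_of_gt (mul_pos (mul_pos h1 (by linarith)) h3)
    · exact ne_of_gt h3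
    · exact ne_of_gt h1
    · exact ne_of_gt (by linarith)
  exact (Finset.prod_ne_zero_iff.mpr (fun i _ => hne i)) h.symm

lemma prod_ff (d r : ℕ) (hd : 2 ≤ d) (hr1 : 1 ≤ r) (hrd : r ≤ d - 1) (a c β : ℝ) :
    ∏ j : Fin d, (Polynomial.X - Polynomial.C (ff d r a c β j)) =
      Polynomial.X * (Polynomial.X - Polynomial.C a) ^ (r - 1)
        * (Polynomial.X - Polynomial.C c) ^ (d - r - 1)
        * (Polynomial.X - Polynomial.C β) := by
  have h0 : ∏ j : Fin d, (Polynomial.X - Polynomial.C (ff d r a c β j))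
      = ∏ n ∈ Finset.range d, (Polynomial.X - Polynomial.C
          (if n = r - 1 then β else if n = d - 1 then 0 else if n < r - 1 then a else c)) := by
    unfold ff
    exact Fin.prod_univ_eq_prod_range
      (fun n => Polynomial.X - Polynomial.C
        (if n = r - 1 then β else if n = d - 1 then 0 else if n < r - 1 then a else c)) d
  rw [h0, Finset.range_eq_Ico,
    ← Finset.prod_Ico_consecutive _ (Nat.zero_le (d-1)) (by omega : d - 1 ≤ d),
    ← Finset.prod_Ico_consecutive _ (Nat.zero_le r) (by omega : r ≤ d - 1),
    ← Finset.prod_Ico_consecutive _ (Nat.zero_le (r-1)) (by omega : r - 1 ≤ r)]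
  have e1 : ∏ n ∈ Finset.Ico 0 (r-1), (Polynomial.X - Polynomial.C
      (if n = r - 1 then β else if n = d - 1 then 0 else if n < r - 1 then a else c))
      = (Polynomial.X - Polynomial.C a) ^ (r - 1) := by
    have hc : ∀ n ∈ Finset.Ico 0 (r-1), (Polynomial.X - Polynomial.C
        (if n = r - 1 then β else if n = d - 1 then 0 else if n < r - 1 then a else c))
        = Polynomial.X - Polynomial.C a := by
      intro n hn
      have hn' := Finset.mem_Ico.mp hn
      rw [if_neg (by omega), if_neg (by omega), if_pos (by omega)]
    rw [Finset.prod_congr rfl hc, Finset.prod_const, Nat.card_Ico, Nat.sub_zero]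
  have e2 : ∏ n ∈ Finset.Ico (r-1) r, (Polynomial.X - Polynomial.C
      (if n = r - 1 then β else if n = d - 1 then 0 else if n < r - 1 then a else c))
      = Polynomial.X - Polynomial.C β := by
    have hIco : Finset.Ico (r-1) r = {r-1} := by
      rw [show r = (r-1) + 1 by omega]
      exact Nat.Ico_succ_singleton _
    rw [hIco, Finset.prod_singleton, if_pos rfl]
  have e3 : ∏ n ∈ Finset.Ico r (d-1), (Polynomial.X - Polynomial.C
      (if n = r - 1 then β else if n = d - 1 then 0 else if n < r - 1 then a else c))
      = (Polynomial.X - Polynomial.C c) ^ (d - r - 1) := by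
    have hc : ∀ n ∈ Finset.Ico r (d-1), (Polynomial.X - Polynomial.C
        (if n = r - 1 then β else if n = d - 1 then 0 else if n < r - 1 then a else c))
        = Polynomial.X - Polynomial.C c := by
      intro n hn
      have hn' := Finset.mem_Ico.mp hn
      rw [if_neg (by omega), if_neg (by omega), if_neg (by omega)]
    rw [Finset.prod_congr rfl hc, Finset.prod_const, Nat.card_Ico,
      show d - 1 - r = d - r - 1 by omega]
  have e4 : ∏ n ∈ Finset.Ico (d-1) d, (Polynomial.X - Polynomial.C
      (if n = r - 1 then β else if n = d - 1 then 0 else if n < r - 1 then a else c))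
      = Polynomial.X := by
    have hIco : Finset.Ico (d-1) d = {d-1} := by
      rw [show d = (d-1) + 1 by omega]
      exact Nat.Ico_succ_singleton _
    rw [hIco, Finset.prod_singleton, if_neg (by omega), if_pos rfl]
    simp
  rw [e1, e2, e3, e4]
  ring


/-- Eigenvalue computation of Section III.C: with `M` the block pattern matrix
built from `a, b, c` and `P = I - J/d` the projection orthogonal to the
all-ones vector, the characteristic polynomial of `P M P` is
`X (X-a)^{r-1} (X-c)^{d-r-1} (X-β)` with
`β = ((r+1)(d-r)a + r(d-r+1)c - 2r(d-r)b)/d`; in particular the all-ones vector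
is in the kernel of `P M P`. -/
theorem stmt_13 (d r : ℕ) (hd : 2 ≤ d) (hr1 : 1 ≤ r) (hrd : r ≤ d - 1)
    (a b c : ℝ) (M : Matrix (Fin d) (Fin d) ℝ)
    (hM : ∀ j k : Fin d, M j k =
      if j.val < r ∧ k.val < r then (1 + if j = k then (1:ℝ) else 0) * a
      else if r ≤ j.val ∧ r ≤ k.val then (1 + if j = k then (1:ℝ) else 0) * c
      else b)
    (P : Matrix (Fin d) (Fin d) ℝ)
    (hP : P = 1 - ((d : ℝ))⁻¹ • Matrix.of (fun _ _ => (1 : ℝ)))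
    (β : ℝ)
    (hβ : β = (((r : ℝ) + 1) * ((d : ℝ) - r) * a + (r : ℝ) * ((d : ℝ) - r + 1) * c
      - 2 * r * ((d : ℝ) - r) * b) / d) :
    (P * M * P).charpoly =
      X * (X - C a) ^ (r - 1) * (X - C c) ^ (d - r - 1) * (X - C β) ∧
    (P * M * P) *ᵥ (fun _ => (1 : ℝ)) = 0 := by
  constructor
  · have h1 := MS_eq d r hd hr1 hrd a b c β M P hM hP hβ
    have h2 := detS_ne d r hd hr1 hrd
    have h3 := charpoly_eq_of_conj (P * M * P) (SS d r) (Matrix.diagonal (ff d r a c β))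
      (by rw [← h1]) h2
    rw [h3, charpoly_diag, prod_ff d r hd hr1 hrd a c β]
  · rw [← Matrix.mulVec_mulVec, ← Matrix.mulVec_mulVec, P_ones (by omega) P hP,
      Matrix.mulVec_zero, Matrix.mulVec_zero]
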